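/- Let G₁ and G₂ be finite simple graphs with n₁, n₂ vertices and m₁, m₂ edges. Then F(G₁ ∨ G₂) = n₂⁴F(G₁) + n₁⁴F(G₂) − F(G₁)F(G₂) + 6n₁n₂²m₂M₁(G₁) + 6n₁²n₂m₁M₁(G₂) + 3n₂F(G₁)M₁(G₂) + 3n₁F(G₂)M₁(G₁) − 6n₂²m₂F(G₁) − 6n₁²m₁F(G₂) − 6n₁n₂M₁(G₁)M₁(G₂), where ∨ is the disjunction. -/

import Mathlib

open Finset

/-- Degree of a vertex: the number of its neighbors. -/
noncomputable def degN {V : Type*} (G : SimpleGraph V) (v : V) : ℕ :=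
  Nat.card (G.neighborSet v)

/-- F-index: the sum of cubes of the vertex degrees. -/
noncomputable def Findex {V : Type*} [Fintype V] (G : SimpleGraph V) : ℕ :=
  ∑ v, (degN G v) ^ 3

/-- First Zagreb index: the sum of squares of the vertex degrees. -/
noncomputable def zagrebM1 {V : Type*} [Fintype V] (G : SimpleGraph V) : ℕ :=
  ∑ v, (degN G v) ^ 2

/-- Number of edges of a graph. -/
noncomputable def numEdges {V : Type*} (G : SimpleGraph V) : ℕ :=
  Nat.card G.edgeSet

/-- Disjunction of two simple graphs. -/
def graphDisjunction {V₁ V₂ : Type*} (G₁ : SimpleGraph V₁) (G₂ : SimpleGraph V₂) :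
    SimpleGraph (V₁ × V₂) where
  Adj x y := x ≠ y ∧ (G₁.Adj x.1 y.1 ∨ G₂.Adj x.2 y.2)
  symm := by
    constructor
    rintro x y ⟨h0, h | h⟩
    · exact ⟨h0.symm, Or.inl h.symm⟩
    · exact ⟨h0.symm, Or.inr h.symm⟩
  loopless := by constructor; rintro x ⟨h0, _⟩; exact h0 rfl

lemma degN_eq_degree' {V : Type*} [Fintype V] (G : SimpleGraph V) [DecidableRel G.Adj] (v : V) :
    degN G v = G.degree v := by
  rw [degN, Nat.card_eq_fintype_card, SimpleGraph.card_neighborSet_eq_degree]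

lemma sum_degN {V : Type*} [Fintype V] (G : SimpleGraph V) :
    ∑ v, degN G v = 2 * numEdges G := by
  classical
  simp_rw [degN_eq_degree']
  rw [SimpleGraph.sum_degrees_eq_twice_card_edges, numEdges, Nat.card_eq_fintype_card,
    SimpleGraph.edgeFinset, Set.toFinset_card]

lemma degN_disj {V₁ V₂ : Type*} [Fintype V₁] [Fintype V₂]
    (G₁ : SimpleGraph V₁) (G₂ : SimpleGraph V₂) (u : V₁) (v : V₂) :
    (degN (graphDisjunction G₁ G₂) (u, v) : ℤ) =
      (Fintype.card V₂ : ℤ) * degN G₁ u + (Fintype.card V₁ : ℤ) * degN G₂ v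
        - degN G₁ u * degN G₂ v := by
  classical
  have hset : (graphDisjunction G₁ G₂).neighborSet (u, v) =
      ↑((univ : Finset (V₁ × V₂)).filter fun p => G₁.Adj u p.1 ∨ G₂.Adj v p.2) := by
    ext p
    simp only [SimpleGraph.mem_neighborSet, graphDisjunction, coe_filter, mem_univ, true_and,
      Set.mem_setOf_eq]
    constructor
    · rintro ⟨-, h⟩; exact h
    · intro h
      refine ⟨?_, h⟩
      rintro rfl
      rcases h with h | h
      · exact G₁.loopless.irrefl u h
      · exact G₂.loopless.irrefl v h
  rw [degN, hset, Nat.card_coe_set_eq, Set.ncard_coe_finset]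
  have hs : (univ : Finset (V₁ × V₂)).filter (fun p => G₁.Adj u p.1) =
      G₁.neighborFinset u ×ˢ univ := by
    ext p; simp [SimpleGraph.mem_neighborFinset]
  have ht : (univ : Finset (V₁ × V₂)).filter (fun p => G₂.Adj v p.2) =
      univ ×ˢ G₂.neighborFinset v := by
    ext p; simp [SimpleGraph.mem_neighborFinset]
  have hst : (univ : Finset (V₁ × V₂)).filter (fun p => G₁.Adj u p.1 ∧ G₂.Adj v p.2) =
      G₁.neighborFinset u ×ˢ G₂.neighborFinset v := by
    ext p; simp [SimpleGraph.mem_neighborFinset]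
  have key := Finset.card_union_add_card_inter
    ((univ : Finset (V₁ × V₂)).filter (fun p => G₁.Adj u p.1))
    ((univ : Finset (V₁ × V₂)).filter (fun p => G₂.Adj v p.2))
  rw [← Finset.filter_or, ← Finset.filter_and, hs, ht, hst] at key
  simp only [Finset.card_product, Finset.card_univ,
    SimpleGraph.card_neighborFinset_eq_degree] at key
  have := congrArg (fun n : ℕ => (n : ℤ)) key
  push_cast at this
  simp only [degN_eq_degree']
  linarith

theorem Findex_disjunction {V₁ V₂ : Type*} [Fintype V₁] [Fintype V₂]
    (G₁ : SimpleGraph V₁) (G₂ : SimpleGraph V₂)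
    (n₁ n₂ m₁ m₂ : ℕ) (hn₁ : Fintype.card V₁ = n₁) (hn₂ : Fintype.card V₂ = n₂)
    (hm₁ : numEdges G₁ = m₁) (hm₂ : numEdges G₂ = m₂) :
    (Findex (graphDisjunction G₁ G₂) : ℤ) =
      (n₂ : ℤ) ^ 4 * Findex G₁ + (n₁ : ℤ) ^ 4 * Findex G₂
        - Findex G₁ * Findex G₂
        + 6 * n₁ * n₂ ^ 2 * m₂ * zagrebM1 G₁ + 6 * n₁ ^ 2 * n₂ * m₁ * zagrebM1 G₂
        + 3 * n₂ * Findex G₁ * zagrebM1 G₂ + 3 * n₁ * Findex G₂ * zagrebM1 G₁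
        - 6 * n₂ ^ 2 * m₂ * Findex G₁ - 6 * n₁ ^ 2 * m₁ * Findex G₂
        - 6 * n₁ * n₂ * zagrebM1 G₁ * zagrebM1 G₂ := by
  classical
  set a : V₁ → ℤ := fun u => (degN G₁ u : ℤ) with ha
  set b : V₂ → ℤ := fun v => (degN G₂ v : ℤ) with hb
  set S1 : ℤ := ∑ u, a u with hS1
  set S2 : ℤ := ∑ u, (a u) ^ 2 with hS2
  set S3 : ℤ := ∑ u, (a u) ^ 3 with hS3
  set T1 : ℤ := ∑ v, b v with hT1
  set T2 : ℤ := ∑ v, (b v) ^ 2 with hT2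
  set T3 : ℤ := ∑ v, (b v) ^ 3 with hT3
  have hS1' : S1 = 2 * m₁ := by
    rw [hS1, ha, ← Nat.cast_sum, sum_degN, hm₁]; push_cast; ring
  have hT1' : T1 = 2 * m₂ := by
    rw [hT1, hb, ← Nat.cast_sum, sum_degN, hm₂]; push_cast; ring
  have hS2' : S2 = (zagrebM1 G₁ : ℤ) := by rw [hS2, zagrebM1]; push_cast; rfl
  have hS3' : S3 = (Findex G₁ : ℤ) := by rw [hS3, Findex]; push_cast; rfl
  have hT2' : T2 = (zagrebM1 G₂ : ℤ) := by rw [hT2, zagrebM1]; push_cast; rfl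
  have hT3' : T3 = (Findex G₂ : ℤ) := by rw [hT3, Findex]; push_cast; rfl
  have hmain : (Findex (graphDisjunction G₁ G₂) : ℤ) =
      ∑ u, ∑ v, ((n₂ : ℤ) * a u + (n₁ : ℤ) * b v - a u * b v) ^ 3 := by
    rw [Findex]
    push_cast
    rw [Fintype.sum_prod_type]
    refine Finset.sum_congr rfl fun u _ => Finset.sum_congr rfl fun v _ => ?_
    rw [degN_disj G₁ G₂ u v, hn₁, hn₂]
  have hinner : ∀ x : ℤ, ∑ v, ((n₂ : ℤ) * x + (n₁ : ℤ) * b v - x * b v) ^ 3 =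
      (n₂ : ℤ) * ((n₂ : ℤ) * x) ^ 3 + (3 * ((n₂ : ℤ) * x) ^ 2 * ((n₁ : ℤ) - x)) * T1
        + (3 * ((n₂ : ℤ) * x) * ((n₁ : ℤ) - x) ^ 2) * T2 + (((n₁ : ℤ) - x) ^ 3) * T3 := by
    intro x
    have e : ∀ y : ℤ, ((n₂ : ℤ) * x + (n₁ : ℤ) * y - x * y) ^ 3 =
        ((n₂ : ℤ) * x) ^ 3 + (3 * ((n₂ : ℤ) * x) ^ 2 * ((n₁ : ℤ) - x)) * y
          + (3 * ((n₂ : ℤ) * x) * ((n₁ : ℤ) - x) ^ 2) * y ^ 2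
          + (((n₁ : ℤ) - x) ^ 3) * y ^ 3 := by intro y; ring
    rw [hT1, hT2, hT3]
    simp_rw [e, Finset.sum_add_distrib, ← Finset.mul_sum, Finset.sum_const, card_univ, hn₂,
      nsmul_eq_mul]
    try ring
  have houter : ∑ u, ∑ v, ((n₂ : ℤ) * a u + (n₁ : ℤ) * b v - a u * b v) ^ 3 =
      (n₁ : ℤ) * ((n₁ : ℤ) ^ 3 * T3)
        + (3 * (n₂ : ℤ) * (n₁ : ℤ) ^ 2 * T2 - 3 * (n₁ : ℤ) ^ 2 * T3) * S1
        + (3 * (n₂ : ℤ) ^ 2 * (n₁ : ℤ) * T1 - 6 * (n₂ : ℤ) * (n₁ : ℤ) * T2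
            + 3 * (n₁ : ℤ) * T3) * S2
        + ((n₂ : ℤ) ^ 4 - 3 * (n₂ : ℤ) ^ 2 * T1 + 3 * (n₂ : ℤ) * T2 - T3) * S3 := by
    have e2 : ∀ x : ℤ,
        (n₂ : ℤ) * ((n₂ : ℤ) * x) ^ 3 + (3 * ((n₂ : ℤ) * x) ^ 2 * ((n₁ : ℤ) - x)) * T1
          + (3 * ((n₂ : ℤ) * x) * ((n₁ : ℤ) - x) ^ 2) * T2 + (((n₁ : ℤ) - x) ^ 3) * T3 =
        ((n₁ : ℤ) ^ 3 * T3)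
          + (3 * (n₂ : ℤ) * (n₁ : ℤ) ^ 2 * T2 - 3 * (n₁ : ℤ) ^ 2 * T3) * x
          + (3 * (n₂ : ℤ) ^ 2 * (n₁ : ℤ) * T1 - 6 * (n₂ : ℤ) * (n₁ : ℤ) * T2
              + 3 * (n₁ : ℤ) * T3) * x ^ 2
          + ((n₂ : ℤ) ^ 4 - 3 * (n₂ : ℤ) ^ 2 * T1 + 3 * (n₂ : ℤ) * T2 - T3) * x ^ 3 := by
      intro x; ring
    rw [hS1, hS2, hS3]
    simp_rw [hinner, e2, Finset.sum_add_distrib, ← Finset.mul_sum, Finset.sum_const, card_univ,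
      hn₁, nsmul_eq_mul]
    try ring
  rw [hmain, houter, hS1', hT1', ← hS2', ← hS3', ← hT2', ← hT3']
  ring
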